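/- arXiv:1701.02015 — 3 statements merged into one kernel-verified Lean document; each statement's English description precedes it below -/
import Mathlib

section
/- The function ψ(x,y) = y + 2x^{1-β} + x^{2-2β}/y on (0,∞)² satisfies the sub-eigenfunction inequality y²(x^{2β} ∂²ψ/∂x² + 2ρ x^β ∂²ψ/∂x∂y + ∂²ψ/∂y²) ≤ 2ψ(x,y) for all x,y > 0, for every β ∈ [0,1] and ρ ∈ [-1,1]. -/
open Real Filter

private lemma hasDerivAt_fix {f : ℝ → ℝ} {a b x : ℝ} (h : HasDerivAt f a x) (e : a = b) :
    HasDerivAt f b x := e ▸ h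

/-- The function `ψ(x,y) = y + 2 x^(1-β) + x^(2-2β)/y` is a sub-eigenfunction of the SABR
infinitesimal generator `A = y²(x^{2β} ∂ₓₓ + 2ρ x^β ∂ₓy + ∂yy)` with constant `2`, for all
`β ∈ [0,1]`, `ρ ∈ [-1,1]` and `x, y > 0`. -/
theorem sabr_adhoc_weight_subeigenfunction
    (β ρ : ℝ) (hβ : β ∈ Set.Icc (0:ℝ) 1) (hρ : ρ ∈ Set.Icc (-1:ℝ) 1)
    (ψ : ℝ → ℝ → ℝ)
    (hψ : ∀ x y : ℝ, ψ x y = y + 2 * x ^ (1 - β) + x ^ (2 - 2*β) / y)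
    (x y : ℝ) (hx : 0 < x) (hy : 0 < y) :
    y^2 * (x ^ (2*β) * deriv (fun t => deriv (fun s => ψ s y) t) x
      + 2 * ρ * x ^ β * deriv (fun t => deriv (fun s => ψ s t) x) y
      + deriv (fun t => deriv (fun s => ψ x s) t) y)
    ≤ 2 * ψ x y := by
  obtain ⟨hβ0, hβ1⟩ := hβ
  obtain ⟨hρ0, hρ1⟩ := hρ
  -- first derivative in x, for arbitrary second argument
  have keyx : ∀ (y' t : ℝ), 0 < t → HasDerivAt (fun s => ψ s y')
      (2 * ((1-β) * t ^ (1-β-1)) + (2-2*β) * t ^ (2-2*β-1) / y') t := by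
    intro y' t ht
    simp only [hψ]
    have h1 := (Real.hasDerivAt_rpow_const (x := t) (p := 1-β) (Or.inl ht.ne')).const_mul 2
    have h2 := (Real.hasDerivAt_rpow_const (x := t) (p := 2-2*β) (Or.inl ht.ne')).div_const y'
    simpa [← add_assoc] using (h1.add h2).const_add y'
  -- second derivative in x
  have e1 : deriv (fun t => deriv (fun s => ψ s y) t) x
      = 2 * ((1-β) * ((1-β-1) * x ^ (1-β-1-1)))
        + (2-2*β) * ((2-2*β-1) * x ^ (2-2*β-1-1)) / y := by
    have hev : (fun t => deriv (fun s => ψ s y) t) =ᶠ[nhds x]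
        (fun t => 2 * ((1-β) * t ^ (1-β-1)) + (2-2*β) * t ^ (2-2*β-1) / y) := by
      filter_upwards [eventually_gt_nhds hx] with t ht
      exact (keyx y t ht).deriv
    rw [hev.deriv_eq]
    have h1 := ((Real.hasDerivAt_rpow_const (x := x) (p := 1-β-1) (Or.inl hx.ne')).const_mul (1-β)).const_mul 2
    have h2 := ((Real.hasDerivAt_rpow_const (x := x) (p := 2-2*β-1) (Or.inl hx.ne')).const_mul (2-2*β)).div_const y
    exact (h1.add h2).deriv
  -- mixed derivative
  have e2 : deriv (fun t => deriv (fun s => ψ s t) x) y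
      = (2-2*β) * x ^ (2-2*β-1) * (-(y^2)⁻¹) := by
    have hev : (fun t => deriv (fun s => ψ s t) x) =ᶠ[nhds y]
        (fun t => 2 * ((1-β) * x ^ (1-β-1)) + (2-2*β) * x ^ (2-2*β-1) * t⁻¹) := by
      filter_upwards [eventually_gt_nhds hy] with t ht
      rw [(keyx t x hx).deriv, div_eq_mul_inv]
    rw [hev.deriv_eq]
    exact (((hasDerivAt_inv hy.ne').const_mul ((2-2*β) * x ^ (2-2*β-1))).const_add _).deriv
  -- first derivative in y
  have keyy : ∀ t : ℝ, 0 < t → HasDerivAt (fun s => ψ x s)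
      (1 + x ^ (2-2*β) * (-(t^2)⁻¹)) t := by
    intro t ht
    simp only [hψ]
    have h3 := (hasDerivAt_inv ht.ne').const_mul (x ^ (2-2*β))
    simpa [div_eq_mul_inv, Pi.add_def] using ((hasDerivAt_id t).add_const (2 * x ^ (1-β))).add h3
  -- second derivative in y
  have e3 : deriv (fun t => deriv (fun s => ψ x s) t) y
      = x ^ (2-2*β) * (2 * y) / (y^2)^2 := by
    have hev : (fun t => deriv (fun s => ψ x s) t) =ᶠ[nhds y]
        (fun t => 1 + -(x ^ (2-2*β) * (t * t)⁻¹)) := by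
      filter_upwards [eventually_gt_nhds hy] with t ht
      rw [(keyy t ht).deriv]; ring
    rw [hev.deriv_eq]
    have h0 : HasDerivAt (fun t : ℝ => (t * t)⁻¹) (-(1 * y + y * 1) / (y * y)^2) y :=
      ((hasDerivAt_id y).mul (hasDerivAt_id y)).inv (by simp [hy.ne'])
    have h1 := ((h0.const_mul (x ^ (2-2*β))).neg.const_add 1)
    exact (hasDerivAt_fix h1 (by field_simp; ring)).deriv
  -- rewrite the generator
  have main : y^2 * (x ^ (2*β) * deriv (fun t => deriv (fun s => ψ s y) t) x
      + 2 * ρ * x ^ β * deriv (fun t => deriv (fun s => ψ s t) x) y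
      + deriv (fun t => deriv (fun s => ψ x s) t) y)
      = -(2*β*(1-β)) * x ^ (β-1) * y^2 + 2*(1-β)*(1-2*β)*y
        - 4*ρ*(1-β) * x ^ (1-β) + 2 * (x ^ (2-2*β) / y) := by
    rw [e1, e2, e3,
      show (1-β-1-1 : ℝ) = (β-1) - 2*β by ring,
      show (2-2*β-1-1 : ℝ) = -(2*β) by ring,
      show x ^ ((β-1) - 2*β) = x ^ (β-1) / x ^ (2*β) from Real.rpow_sub hx _ _,
      show x ^ (-(2*β)) = (x ^ (2*β))⁻¹ from Real.rpow_neg hx.le _,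
      show (2-2*β-1 : ℝ) = (1-β) - β by ring,
      show x ^ ((1-β) - β) = x ^ (1-β) / x ^ β from Real.rpow_sub hx _ _]
    have n1 : x ^ (2*β) ≠ 0 := (Real.rpow_pos_of_pos hx _).ne'
    have n2 : x ^ β ≠ 0 := (Real.rpow_pos_of_pos hx _).ne'
    field_simp
    ring
  rw [main, hψ,
    show 2 * (y + 2 * x ^ (1-β) + x ^ (2-2*β) / y)
      = 2*y + 4 * x ^ (1-β) + 2 * (x ^ (2-2*β) / y) from by ring]
  have hA : (0:ℝ) < x ^ (β-1) := Real.rpow_pos_of_pos hx _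
  have hB : (0:ℝ) < x ^ (1-β) := Real.rpow_pos_of_pos hx _
  nlinarith [mul_nonneg (mul_nonneg hβ0 (by linarith : (0:ℝ) ≤ 1-β)) (mul_nonneg hA.le (sq_nonneg y)),
    mul_nonneg (mul_nonneg hy.le hβ0) (by linarith : (0:ℝ) ≤ 3-2*β),
    mul_nonneg hB.le (mul_nonneg (by linarith : (0:ℝ) ≤ 1+ρ) (by linarith : (0:ℝ) ≤ 1-β)),
    mul_nonneg hB.le hβ0]
end

section
/- The map φ(x̂, ŷ) = (x̂^{1-β}/((1-ρ²)^{1/2}(1-β)) − ρŷ/(1-ρ²)^{1/2}, ŷ) from the SABR plane S = (0,∞)² with metric g to the hyperbolic upper half-plane ℍ with metric h = (dx² + dy²)/y² is a local isometry, i.e., the pullback of h under φ equals g. -/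
open Real

/-- The map `φ(x̂,ŷ) = (x̂^{1-β}/(ρ̄(1-β)) − ρŷ/ρ̄, ŷ)`, with `ρ̄ = √(1-ρ²)`, from the SABR
plane `S = (0,∞)²` with metric `g` to the hyperbolic upper half-plane `(ℍ, h)`,
`h = (dx²+dy²)/y²`, is a local isometry: at every point `(x,y) ∈ S` and for every tangent
vector `(a,b)`, the value of `h` at `φ(x,y)` on the pushed-forward vector `Dφ(x,y)(a,b)`
equals the value of `g` at `(x,y)` on `(a,b)`. -/
theorem sabr_plane_local_isometry
    (β ρ : ℝ) (hβ : β ∈ Set.Ico (0:ℝ) 1) (hρ : ρ ∈ Set.Ioo (-1:ℝ) 1)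
    (φ : ℝ × ℝ → ℝ × ℝ)
    (hφ : ∀ p : ℝ × ℝ, φ p =
      (p.1 ^ (1 - β) / (Real.sqrt (1 - ρ^2) * (1 - β)) - ρ * p.2 / Real.sqrt (1 - ρ^2),
       p.2))
    (x y : ℝ) (hx : 0 < x) (hy : 0 < y) (a b : ℝ) :
    ((fderiv ℝ φ (x, y) (a, b)).1 ^ 2 + (fderiv ℝ φ (x, y) (a, b)).2 ^ 2)
        / (φ (x, y)).2 ^ 2
      = (1 / (1 - ρ^2)) *
          (a^2 / (y^2 * x ^ (2*β)) - 2 * ρ * a * b / (y^2 * x ^ β) + b^2 / y^2) := by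
  obtain ⟨hβ0, hβ1⟩ := hβ
  obtain ⟨hρ1, hρ2⟩ := hρ
  set c := Real.sqrt (1 - ρ^2) with hc
  have hρsq : (0:ℝ) < 1 - ρ^2 := by nlinarith
  have hcpos : 0 < c := Real.sqrt_pos.mpr hρsq
  have hc2 : c ^ 2 = 1 - ρ^2 := Real.sq_sqrt hρsq.le
  have hβne : (1:ℝ) - β ≠ 0 := by linarith
  have hcne : c ≠ 0 := hcpos.ne'
  have hφ' : φ = fun p : ℝ × ℝ =>
      (p.1 ^ (1 - β) / (c * (1 - β)) - ρ * p.2 / c, p.2) := funext hφ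
  set L1 : ℝ × ℝ →L[ℝ] ℝ :=
    (((1 - β) * x ^ (1 - β - 1) / (c * (1 - β))) • (ContinuousLinearMap.fst ℝ ℝ ℝ)) -
      ((ρ / c) • (ContinuousLinearMap.snd ℝ ℝ ℝ)) with hL1
  have h1 : HasFDerivAt (fun p : ℝ × ℝ => p.1 ^ (1 - β))
      (((1 - β) * x ^ (1 - β - 1)) • (ContinuousLinearMap.fst ℝ ℝ ℝ)) (x, y) := by
    have := (Real.hasDerivAt_rpow_const (p := 1 - β) (Or.inl hx.ne')).comp_hasFDerivAt (x, y)
      (hasFDerivAt_fst (𝕜 := ℝ) (p := (x, y)))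
    exact this
  have hF : HasFDerivAt φ (L1.prod (ContinuousLinearMap.snd ℝ ℝ ℝ)) (x, y) := by
    rw [hφ']
    have h2 : HasFDerivAt (fun p : ℝ × ℝ => ρ * p.2 / c)
        ((ρ / c) • (ContinuousLinearMap.snd ℝ ℝ ℝ)) (x, y) := by
      have heq : (fun p : ℝ × ℝ => ρ * p.2 / c) = fun p : ℝ × ℝ => (ρ / c) * p.2 := by
        funext p; ring
      rw [heq]
      exact hasFDerivAt_snd.const_mul (ρ / c)
    have h1' := (h1.const_mul (1 / (c * (1 - β)))).sub h2
    have heq1 : (fun p : ℝ × ℝ => p.1 ^ (1 - β) / (c * (1 - β)) - ρ * p.2 / c) =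
        fun p : ℝ × ℝ => (1 / (c * (1 - β))) * p.1 ^ (1 - β) - ρ * p.2 / c := by
      funext p; ring
    refine HasFDerivAt.prodMk ?_ hasFDerivAt_snd
    rw [heq1]
    convert h1' using 1
    ext v <;> simp [hL1] <;> field_simp <;> ring
    rw [hL1, smul_smul]; congr 2; ring
  rw [hF.fderiv, hφ']
  simp only [ContinuousLinearMap.prod_apply, ContinuousLinearMap.coe_sub',
    Pi.sub_apply, ContinuousLinearMap.coe_smul', Pi.smul_apply,
    ContinuousLinearMap.coe_fst', ContinuousLinearMap.coe_snd', smul_eq_mul, hL1]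
  have hxb : x ^ (1 - β - 1) = (x ^ β)⁻¹ := by
    rw [show (1 - β - 1) = -β by ring, Real.rpow_neg hx.le]
  have hx2b : x ^ (2 * β) = (x ^ β) ^ 2 := by
    rw [mul_comm, Real.rpow_mul hx.le, Real.rpow_two]
  have hA : (0:ℝ) < x ^ β := Real.rpow_pos_of_pos hx β
  rw [hxb, hx2b, ← hc2]
  set A := x ^ β
  field_simp
  linear_combination (A^2 * b^2) * hc2
end

section
/- Suppose f : (0,∞)² → ℝ is differentiable and satisfies the system x^{2β−1}y²(2β + x∂_x f) + ρx^β y(2 + y∂_y f) = 0 and ρx^{β−1}y²(β + x∂_x f) + y(2 + y∂_y f) = 0 for all x,y > 0, where ρ ∈ (-1,1), ρ ≠ 0. Then necessarily β = 0 or β = 1. -/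
open Real

/-- No-drift condition for a symmetrizing measure of the SABR generator: if `f` is
differentiable on `(0,∞)²` (with partial derivatives `fx`, `fy`) and satisfies the system
`x^{2β−1}y²(2β + x∂ₓf) + ρx^β y(2 + y∂_yf) = 0` and
`ρx^{β−1}y²(β + x∂ₓf) + y(2 + y∂_yf) = 0` for all `x,y > 0`, where `ρ ∈ (-1,1)`, `ρ ≠ 0`
and `β ∈ [0,1]`, then necessarily `β = 0` or `β = 1`. -/
theorem sabr_symmetrizing_measure_forces_beta
    (β ρ : ℝ) (hβ : β ∈ Set.Icc (0:ℝ) 1) (hρ : ρ ∈ Set.Ioo (-1:ℝ) 1) (hρ0 : ρ ≠ 0)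
    (f fx fy : ℝ → ℝ → ℝ)
    (hfx : ∀ x y : ℝ, 0 < x → 0 < y → HasDerivAt (fun t => f t y) (fx x y) x)
    (hfy : ∀ x y : ℝ, 0 < x → 0 < y → HasDerivAt (fun t => f x t) (fy x y) y)
    (h1 : ∀ x y : ℝ, 0 < x → 0 < y →
      x ^ (2*β - 1) * y^2 * (2*β + x * fx x y) + ρ * x ^ β * y * (2 + y * fy x y) = 0)
    (h2 : ∀ x y : ℝ, 0 < x → 0 < y →
      ρ * x ^ (β - 1) * y^2 * (β + x * fx x y) + y * (2 + y * fy x y) = 0) :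
    β = 0 ∨ β = 1 := by
  obtain ⟨hρ1, hρ2⟩ := hρ
  have hρsq : (1:ℝ) - ρ^2 > 0 := by nlinarith
  set c : ℝ := -(2 - ρ^2) * β / (1 - ρ^2) with hc
  -- Step 1: x * fx x y = c for all x, y > 0
  have key : ∀ x y : ℝ, 0 < x → 0 < y → x * fx x y = c := by
    intro x y hx hy
    have e1 := h1 x y hx hy
    have e2 := h2 x y hx hy
    have hsplit : x ^ (2*β - 1) = x ^ β * x ^ (β - 1) := by
      rw [← Real.rpow_add hx]; ring_nf
    have hxb : (0:ℝ) < x ^ β := Real.rpow_pos_of_pos hx β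
    have hxb1 : (0:ℝ) < x ^ (β - 1) := Real.rpow_pos_of_pos hx (β - 1)
    -- e1 - ρ * x^β * e2 = 0
    rw [hsplit] at e1
    have e3 : x ^ β * x ^ (β-1) * y^2 * ((2*β + x * fx x y) - ρ^2 * (β + x * fx x y)) = 0 := by
      linear_combination e1 - ρ * x ^ β * e2
    have hy2 : (0:ℝ) < y^2 := by positivity
    have e4 : (2*β + x * fx x y) - ρ^2 * (β + x * fx x y) = 0 := by
      have hne : x ^ β * x ^ (β-1) * y^2 ≠ 0 := by positivity
      exact (mul_eq_zero.mp e3).resolve_left hne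
    field_simp [hc]
    rw [hc, eq_div_iff hρsq.ne']; linear_combination e4
  -- Step 2: f x y - c * log x is constant in x, hence fy x y = fy 1 y
  have fyconst : ∀ x y : ℝ, 0 < x → 0 < y → fy x y = fy 1 y := by
    intro x y hx hy
    -- f x' t - c * log x' constant on Ioi 0 for each fixed t
    have hconst : ∀ t : ℝ, 0 < t → ∀ x' : ℝ, 0 < x' → f x' t - c * Real.log x' = f 1 t := by
      intro t ht x' hx'
      have hderiv : ∀ z ∈ Set.Ioi (0:ℝ),
          HasDerivAt (fun s => f s t - c * Real.log s) 0 z := by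
        intro z hz
        have hz' : (0:ℝ) < z := hz
        have h1' := hfx z t hz' ht
        have hfxval : fx z t = c / z := by
          have := key z t hz' ht
          field_simp at this ⊢
          linarith [this]
        rw [hfxval] at h1'
        have hlog : HasDerivAt (fun s => c * Real.log s) (c / z) z := by
          simpa [div_eq_mul_inv, mul_comm, mul_assoc] using
            (Real.hasDerivAt_log hz'.ne').const_mul c
        have h3 := h1'.sub hlog
        rw [sub_self] at h3
        exact h3
      -- conclude constancy on convex open set Ioi 0
      have hmem1 : (1:ℝ) ∈ Set.Ioi (0:ℝ) := by norm_num
      have hmemx : x' ∈ Set.Ioi (0:ℝ) := hx'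
      have := (convex_Ioi (0:ℝ)).is_const_of_fderivWithin_eq_zero
        (f := fun s => f s t - c * Real.log s)
        (fun z hz => ((hderiv z hz).differentiableAt).differentiableWithinAt)
        (fun z hz => by
          have : fderivWithin ℝ (fun s => f s t - c * Real.log s) (Set.Ioi 0) z
              = fderiv ℝ (fun s => f s t - c * Real.log s) z :=
            fderivWithin_of_isOpen isOpen_Ioi hz
          rw [this, (hderiv z hz).hasFDerivAt.fderiv]
          ext u
          simp)
        hmemx hmem1
      simpa [Real.log_one] using this
    -- so f x · = f 1 · + c log x, derivatives in y agree
    have hfun : (fun t => f x t) =ᶠ[nhds y] (fun t => f 1 t + c * Real.log x) := by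
      have : ∀ t ∈ Set.Ioi (0:ℝ), f x t = f 1 t + c * Real.log x := by
        intro t ht
        have := hconst t ht x hx
        linarith
      exact Filter.eventuallyEq_of_mem (Ioi_mem_nhds hy) this
    have hd1 : HasDerivAt (fun t => f x t) (fy x y) y := hfy x y hx hy
    have hd2 : HasDerivAt (fun t => f 1 t + c * Real.log x) (fy 1 y) y :=
      (hfy 1 y one_pos hy).add_const _
    have := hd1.congr_of_eventuallyEq hfun.symm
    exact hd2.unique this ▸ (this.unique hd2)
  -- Step 3: evaluate h2 at (x,1) for x = 1 and x = 2
  have hK : ∀ x : ℝ, 0 < x → ρ * x ^ (β - 1) * (β + c) + (2 + fy 1 1) = 0 := by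
    intro x hx
    have := h2 x 1 hx one_pos
    rw [key x 1 hx one_pos, fyconst x 1 hx one_pos] at this
    simpa using this
  have hA := hK 1 one_pos
  have hB := hK 2 (by norm_num)
  rw [Real.one_rpow] at hA
  have hfactor : ρ * (β + c) * ((2:ℝ) ^ (β - 1) - 1) = 0 := by nlinarith [hA, hB]
  have : (β + c) * ((2:ℝ) ^ (β - 1) - 1) = 0 := by
    rcases mul_eq_zero.mp hfactor with h | h
    · rcases mul_eq_zero.mp h with h' | h'
      · exact absurd h' hρ0
      · simp [h']
    · simp [h]
  rcases mul_eq_zero.mp this with h | h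
  · left
    have : β + -(2 - ρ^2) * β / (1 - ρ^2) = 0 := h
    field_simp at this
    nlinarith [this]
  · right
    have h2' : (2:ℝ) ^ (β - 1) = 1 := by linarith
    have hlog := congrArg Real.log h2'
    rw [Real.log_rpow (by norm_num), Real.log_one] at hlog
    have hl2 : (0:ℝ) < Real.log 2 := Real.log_pos (by norm_num)
    have : β - 1 = 0 := by
      rcases mul_eq_zero.mp hlog with h | h
      · exact h
      · linarith
    linarith
end
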